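/- arXiv:1306.4395 — 6 statements merged into one kernel-verified Lean document; each statement's English description precedes it below -/
import Mathlib

section
/- Let W : Λ → ℝ be a real sequence on a finite set Λ, 0 ∈ Λ, E = W(0), and suppose |W(n) − E| ≥ κ for all n ∈ Λ \ {0}. Let T be a self-adjoint operator on ℓ²(Λ) with operator norm ‖T‖, let λ ∈ (0, κ/(2‖T‖)), and H = λT + W (W acting by multiplication). Then the spectral projection of H onto [E − κ/2, E + κ/2] has trace exactly 1; i.e., H has exactly one eigenvalue E₁ in [E − κ/2, E + κ/2], and |E₁ − E| ≤ λ‖T‖. -/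
open Module

set_option maxHeartbeats 1600000

/-- Pairwise orthogonal eigenvectors of a symmetric operator satisfy the Pythagorean
identity for norms of sums. -/
lemma orth_sum_norm_sq {V : Type*} [NormedAddCommGroup V] [InnerProductSpace ℂ V]
    {A : V →ₗ[ℂ] V} (hA : A.IsSymmetric) {ι : Type*} (s : Finset ι) (e : ι → ℂ)
    (he : Set.InjOn e s) (g : ι → V) (hg : ∀ i ∈ s, g i ∈ Module.End.eigenspace A (e i)) :
    ‖∑ i ∈ s, g i‖ ^ 2 = ∑ i ∈ s, ‖g i‖ ^ 2 := by
  have horth : ∀ i ∈ s, ∀ j ∈ s, i ≠ j → (inner ℂ (g i) (g j) : ℂ) = 0 := by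
    intro i hi j hj hij
    exact hA.orthogonalFamily_eigenspaces (he.ne hi hj hij) ⟨g i, hg i hi⟩ ⟨g j, hg j hj⟩
  have h : (inner ℂ (∑ i ∈ s, g i) (∑ i ∈ s, g i) : ℂ) = ∑ i ∈ s, inner ℂ (g i) (g i) := by
    rw [inner_sum]
    refine Finset.sum_congr rfl fun j hj => ?_
    rw [sum_inner, Finset.sum_eq_single_of_mem j hj]
    intro i hi hij
    exact horth i hi j hj hij
  simp only [inner_self_eq_norm_sq_to_K] at h
  exact_mod_cast h

/-- Initial condition: if `E = W 0` is `κ`-separated from the other diagonal values `W n`,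
`n ∈ Λ \ {0}`, and `0 < λ < κ/(2‖T‖)`, then `H = λT + W` has exactly one eigenvalue `E₁`
(counted with multiplicity) in `[E − κ/2, E + κ/2]`, and `|E₁ − E| ≤ λ‖T‖`. -/
theorem initial_simple_eigenvalue
    {d : ℕ} (Λ : Finset (Fin d → ℤ)) (h0 : (0 : Fin d → ℤ) ∈ Λ)
    (W : (Fin d → ℤ) → ℝ) (κ lam : ℝ) (hκ : 0 < κ)
    (T : EuclideanSpace ℂ Λ →L[ℂ] EuclideanSpace ℂ Λ) (hT : IsSelfAdjoint T)
    (hsep : ∀ n : Λ, (n : Fin d → ℤ) ≠ 0 → κ ≤ |W n - W 0|)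
    (hlam : 0 < lam) (hlam' : lam < κ / (2 * ‖T‖))
    (H : EuclideanSpace ℂ Λ →ₗ[ℂ] EuclideanSpace ℂ Λ)
    (hHdef : ∀ (ψ : EuclideanSpace ℂ Λ) (n : Λ),
      H ψ n = (lam : ℂ) * T ψ n + (W n : ℂ) * ψ n) :
    (finrank ℂ
      (⨆ μ ∈ Set.Icc (W 0 - κ / 2) (W 0 + κ / 2),
        Module.End.eigenspace H (μ : ℂ) : Submodule ℂ (EuclideanSpace ℂ Λ)) = 1) ∧
    ∃ E₁ ∈ Set.Icc (W 0 - κ / 2) (W 0 + κ / 2),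
      (Module.End.eigenspace H (E₁ : ℂ) ≠ ⊥) ∧ |E₁ - W 0| ≤ lam * ‖T‖ := by
  classical
  set E : ℝ := W 0 with hE
  set i₀ : Λ := ⟨0, h0⟩ with hi0
  -- ‖T‖ > 0
  have hTpos : 0 < ‖T‖ := by
    rcases (norm_nonneg T).lt_or_eq with h | h
    · exact h
    · exfalso
      rw [← h, mul_zero, div_zero] at hlam'
      linarith
  have hlT : lam * ‖T‖ < κ / 2 := by
    have h2 : (0:ℝ) < 2 * ‖T‖ := by positivity
    have := (lt_div_iff₀ h2).mp hlam'
    nlinarith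
  -- H is symmetric
  have hHsym : LinearMap.IsSymmetric H := by
    intro x y
    have hTs := hT.isSymmetric x y
    simp only [PiLp.inner_apply, RCLike.inner_apply', ContinuousLinearMap.coe_coe] at hTs ⊢
    calc ∑ n : {x // x ∈ Λ}, (starRingEnd ℂ) (H x n) * y n
        = (lam:ℂ) * ∑ n : {x // x ∈ Λ}, (starRingEnd ℂ) (T x n) * y n
            + ∑ n : {x // x ∈ Λ}, (W n : ℂ) * ((starRingEnd ℂ) (x n) * y n) := by
          simp only [hHdef, map_add, map_mul, Complex.conj_ofReal]
          rw [Finset.mul_sum, ← Finset.sum_add_distrib]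
          exact Finset.sum_congr rfl fun n _ => by ring
      _ = (lam:ℂ) * ∑ n : {x // x ∈ Λ}, (starRingEnd ℂ) (x n) * (T y n)
            + ∑ n : {x // x ∈ Λ}, (W n : ℂ) * ((starRingEnd ℂ) (x n) * y n) := by rw [hTs]
      _ = ∑ n : {x // x ∈ Λ}, (starRingEnd ℂ) (x n) * H y n := by
          simp only [hHdef]
          rw [Finset.mul_sum, ← Finset.sum_add_distrib]
          exact Finset.sum_congr rfl fun n _ => by ring
  -- the distinguished vector δ₀
  set δ : EuclideanSpace ℂ Λ := EuclideanSpace.single i₀ (1:ℂ) with hδdef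
  have hδnorm : ‖δ‖ = 1 := by
    rw [hδdef, EuclideanSpace.norm_single]; norm_num
  have hδ0 : δ ≠ 0 := by
    intro h; rw [h] at hδnorm; simp at hδnorm
  have hHδ : H δ - ((E:ℂ)) • δ = (lam:ℂ) • (T δ) := by
    ext n
    simp only [PiLp.sub_apply, PiLp.smul_apply, smul_eq_mul, hHdef]
    have hWn : (W n : ℂ) * δ n = (E : ℂ) * δ n := by
      rcases eq_or_ne n i₀ with h | h
      · subst h; rfl
      · have : δ n = 0 := by
          rw [hδdef]
          simp [EuclideanSpace.single_apply, h]
        rw [this, mul_zero, mul_zero]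
    rw [hWn]; ring
  have hHδnorm : ‖H δ - ((E:ℂ)) • δ‖ ≤ lam * ‖T‖ := by
    rw [hHδ, norm_smul]
    have h1 := T.le_opNorm δ
    rw [hδnorm, mul_one] at h1
    have h2 : ‖(lam:ℂ)‖ = lam := by
      rw [Complex.norm_real, Real.norm_eq_abs, abs_of_pos hlam]
    rw [h2]
    exact mul_le_mul_of_nonneg_left h1 hlam.le
  -- decompose δ over all eigenspaces
  have htop : (⨆ μ : ℂ, Module.End.eigenspace H μ) = ⊤ := by
    rw [← Submodule.orthogonal_eq_bot_iff]
    exact hHsym.orthogonalComplement_iSup_eigenspaces_eq_bot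
  obtain ⟨f, hf, hfsum⟩ :=
    (Submodule.mem_iSup_iff_exists_finsupp (fun μ : ℂ => Module.End.eigenspace H μ) δ).mp
      (htop ▸ Submodule.mem_top)
  have hex : ∃ μ ∈ f.support, ‖μ - (E:ℂ)‖ ≤ lam * ‖T‖ := by
    by_contra hcon
    push_neg at hcon
    have hsupp : f.support.Nonempty := by
      rcases Finset.eq_empty_or_nonempty f.support with h | h
      · exfalso; apply hδ0
        rw [← hfsum, Finsupp.sum, h, Finset.sum_empty]
      · exact h
    have h1 : ‖δ‖ ^ 2 = ∑ μ ∈ f.support, ‖f μ‖ ^ 2 := by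
      rw [← hfsum, Finsupp.sum]
      exact orth_sum_norm_sq hHsym _ id (fun _ _ _ _ h => h) _ (fun μ _ => hf μ)
    have h2 : H δ - ((E:ℂ)) • δ = ∑ μ ∈ f.support, (μ - (E:ℂ)) • f μ := by
      rw [← hfsum, Finsupp.sum, map_sum, Finset.smul_sum, ← Finset.sum_sub_distrib]
      refine Finset.sum_congr rfl fun μ _ => ?_
      rw [Module.End.mem_eigenspace_iff.mp (hf μ), sub_smul]
    have h3 : ‖H δ - ((E:ℂ)) • δ‖ ^ 2
        = ∑ μ ∈ f.support, ‖μ - (E:ℂ)‖ ^ 2 * ‖f μ‖ ^ 2 := by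
      rw [h2, orth_sum_norm_sq hHsym _ id (fun _ _ _ _ h => h) _
        (fun μ _ => Submodule.smul_mem _ _ (hf μ))]
      exact Finset.sum_congr rfl fun μ _ => by rw [norm_smul, mul_pow]
    have h4 : (lam * ‖T‖) ^ 2 * ‖δ‖ ^ 2 < ‖H δ - ((E:ℂ)) • δ‖ ^ 2 := by
      rw [h3, h1, Finset.mul_sum]
      apply Finset.sum_lt_sum_of_nonempty hsupp
      intro μ hμ
      have hfne : f μ ≠ 0 := Finsupp.mem_support_iff.mp hμ
      have hfp : 0 < ‖f μ‖ ^ 2 := pow_pos (norm_pos_iff.mpr hfne) 2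
      have hc := hcon μ hμ
      have hlTnn : 0 ≤ lam * ‖T‖ := by positivity
      nlinarith [mul_self_lt_mul_self hlTnn hc, hfp]
    rw [hδnorm] at h4
    nlinarith [norm_nonneg (H δ - ((E:ℂ)) • δ)]
  obtain ⟨μ₀, hμ₀s, hμ₀close⟩ := hex
  have hfμ₀ : f μ₀ ≠ 0 := Finsupp.mem_support_iff.mp hμ₀s
  have hev : Module.End.HasEigenvalue H μ₀ :=
    Module.End.hasEigenvalue_of_hasEigenvector ⟨hf μ₀, hfμ₀⟩
  have hreal : (starRingEnd ℂ) μ₀ = μ₀ := hHsym.conj_eigenvalue_eq_self hev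
  set E₁ : ℝ := μ₀.re with hE₁
  have hμ₀eq : ((E₁ : ℝ) : ℂ) = μ₀ := Complex.conj_eq_iff_re.mp hreal
  have habs : |E₁ - E| ≤ lam * ‖T‖ := by
    have h1 : ((E₁ - E : ℝ) : ℂ) = μ₀ - (E:ℂ) := by
      rw [Complex.ofReal_sub, hμ₀eq]
    calc |E₁ - E| = ‖((E₁ - E : ℝ) : ℂ)‖ := by
          rw [Complex.norm_real, Real.norm_eq_abs]
      _ = ‖μ₀ - (E:ℂ)‖ := by rw [h1]
      _ ≤ lam * ‖T‖ := hμ₀close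
  have hIcc : E₁ ∈ Set.Icc (E - κ / 2) (E + κ / 2) := by
    have h := abs_le.mp (habs.trans hlT.le)
    exact ⟨by linarith [h.1], by linarith [h.2]⟩
  have heig : Module.End.eigenspace H ((E₁:ℝ):ℂ) ≠ ⊥ := by
    rw [hμ₀eq]
    intro hb
    apply hfμ₀
    have hm := hf μ₀
    rw [hb, Submodule.mem_bot] at hm
    exact hm
  refine ⟨?_, E₁, hIcc, heig, habs⟩
  -- now the dimension count
  set S : Submodule ℂ (EuclideanSpace ℂ Λ) :=
    ⨆ μ ∈ Set.Icc (E - κ / 2) (E + κ / 2), Module.End.eigenspace H (μ:ℂ) with hSdef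
  have hmem : f μ₀ ∈ S := by
    have hle : Module.End.eigenspace H ((E₁:ℝ):ℂ) ≤ S :=
      le_iSup₂ (f := fun (μ:ℝ) (_ : μ ∈ Set.Icc (E - κ/2) (E + κ/2)) =>
        Module.End.eigenspace H (μ:ℂ)) E₁ hIcc
    apply hle
    rw [hμ₀eq]
    exact hf μ₀
  have h1le : 1 ≤ finrank ℂ S := by
    have : 0 < finrank ℂ S := by
      rw [Module.finrank_pos_iff_exists_ne_zero]
      exact ⟨⟨f μ₀, hmem⟩, by simpa [Submodule.mk_eq_zero] using hfμ₀⟩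
    omega
  -- injectivity of evaluation at 0 on S
  have hker : ∀ ψ : EuclideanSpace ℂ Λ, ψ ∈ S → ψ i₀ = 0 → ψ = 0 := by
    intro ψ hψS hψ0
    by_contra hψne
    have hb : 0 < ‖ψ‖ := norm_pos_iff.mpr hψne
    rw [hSdef] at hψS
    obtain ⟨g, hg, hgsum⟩ :=
      (Submodule.mem_iSup_iff_exists_finsupp
        (fun μ : ℝ => ⨆ (_ : μ ∈ Set.Icc (E - κ/2) (E + κ/2)),
          Module.End.eigenspace H (μ:ℂ)) ψ).mp hψS
    have hgmem : ∀ μ ∈ g.support,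
        μ ∈ Set.Icc (E - κ/2) (E + κ/2) ∧ g μ ∈ Module.End.eigenspace H (μ:ℂ) := by
      intro μ hμ
      by_cases h : μ ∈ Set.Icc (E - κ/2) (E + κ/2)
      · refine ⟨h, ?_⟩
        have := hg μ
        rwa [iSup_pos h] at this
      · exfalso
        have := hg μ
        rw [iSup_neg h, Submodule.mem_bot] at this
        exact Finsupp.mem_support_iff.mp hμ this
    have hinj : Set.InjOn (fun μ : ℝ => (μ:ℂ)) g.support :=
      fun a _ b _ h => Complex.ofReal_injective h
    have h1 : ‖ψ‖ ^ 2 = ∑ μ ∈ g.support, ‖g μ‖ ^ 2 := by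
      rw [← hgsum, Finsupp.sum]
      exact orth_sum_norm_sq hHsym _ (fun μ : ℝ => (μ:ℂ)) hinj _
        (fun μ hμ => (hgmem μ hμ).2)
    have h2 : H ψ - ((E:ℂ)) • ψ = ∑ μ ∈ g.support, (((μ:ℝ):ℂ) - (E:ℂ)) • g μ := by
      rw [← hgsum, Finsupp.sum, map_sum, Finset.smul_sum, ← Finset.sum_sub_distrib]
      refine Finset.sum_congr rfl fun μ hμ => ?_
      rw [Module.End.mem_eigenspace_iff.mp (hgmem μ hμ).2, sub_smul]
    have h3 : ‖H ψ - ((E:ℂ)) • ψ‖ ^ 2 ≤ (κ/2) ^ 2 * ‖ψ‖ ^ 2 := by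
      have heq : ‖H ψ - ((E:ℂ)) • ψ‖ ^ 2
          = ∑ μ ∈ g.support, ‖((μ:ℝ):ℂ) - (E:ℂ)‖ ^ 2 * ‖g μ‖ ^ 2 := by
        rw [h2, orth_sum_norm_sq hHsym _ (fun μ : ℝ => (μ:ℂ)) hinj _
          (fun μ hμ => Submodule.smul_mem _ _ (hgmem μ hμ).2)]
        exact Finset.sum_congr rfl fun μ _ => by rw [norm_smul, mul_pow]
      rw [heq, h1, Finset.mul_sum]
      apply Finset.sum_le_sum
      intro μ hμ
      have hIccμ := (hgmem μ hμ).1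
      have habsμ : ‖((μ:ℝ):ℂ) - (E:ℂ)‖ ≤ κ/2 := by
        have : ((μ - E : ℝ) : ℂ) = ((μ:ℝ):ℂ) - (E:ℂ) := by push_cast; ring
        rw [← this, Complex.norm_real, Real.norm_eq_abs, abs_le]
        exact ⟨by linarith [hIccμ.1], by linarith [hIccμ.2]⟩
      have hnn : (0:ℝ) ≤ ‖((μ:ℝ):ℂ) - (E:ℂ)‖ := norm_nonneg _
      exact mul_le_mul_of_nonneg_right (pow_le_pow_left₀ hnn habsμ 2) (sq_nonneg _)
    -- lower bound using separation
    set χ : EuclideanSpace ℂ Λ := H ψ - ((E:ℂ)) • ψ - (lam:ℂ) • (T ψ) with hχdef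
    have hχ : ∀ n : Λ, χ n = ((W n : ℂ) - (E:ℂ)) * ψ n := by
      intro n
      rw [hχdef]
      simp only [PiLp.sub_apply, PiLp.smul_apply, smul_eq_mul, hHdef]
      ring
    have hχsq : κ ^ 2 * ‖ψ‖ ^ 2 ≤ ‖χ‖ ^ 2 := by
      rw [PiLp.norm_sq_eq_of_L2, PiLp.norm_sq_eq_of_L2, Finset.mul_sum]
      apply Finset.sum_le_sum
      intro n _
      rcases eq_or_ne (n : Fin d → ℤ) 0 with h | h
      · have hn : n = i₀ := Subtype.ext h
        subst hn
        rw [hχ, hψ0]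
        simp
      · have hs := hsep n h
        rw [hχ, norm_mul]
        have hWE : ‖((W n : ℂ) - (E:ℂ))‖ = |W n - E| := by
          have : ((W n - E : ℝ) : ℂ) = (W n : ℂ) - (E:ℂ) := by push_cast; ring
          rw [← this, Complex.norm_real, Real.norm_eq_abs]
        rw [hWE, ← mul_pow]
        have hle : κ * ‖ψ n‖ ≤ |W ↑n - E| * ‖ψ n‖ :=
          mul_le_mul_of_nonneg_right hs (norm_nonneg _)
        exact pow_le_pow_left₀ (by positivity) hle 2
    have hχnorm : ‖χ‖ ≤ ‖H ψ - ((E:ℂ)) • ψ‖ + lam * ‖T‖ * ‖ψ‖ := by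
      rw [hχdef]
      refine (norm_sub_le _ _).trans ?_
      gcongr
      rw [norm_smul]
      have h2 : ‖(lam:ℂ)‖ = lam := by
        rw [Complex.norm_real, Real.norm_eq_abs, abs_of_pos hlam]
      rw [h2, mul_assoc]
      exact mul_le_mul_of_nonneg_left (T.le_opNorm ψ) hlam.le
    have ha : ‖H ψ - ((E:ℂ)) • ψ‖ ≤ (κ/2) * ‖ψ‖ := by
      have hnn : (0:ℝ) ≤ ‖H ψ - ((E:ℂ)) • ψ‖ := norm_nonneg _
      have hq : (0:ℝ) ≤ (κ/2) * ‖ψ‖ := by positivity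
      nlinarith
    have hc : κ * ‖ψ‖ ≤ ‖χ‖ := by
      have hnn : (0:ℝ) ≤ ‖χ‖ := norm_nonneg _
      have hq : (0:ℝ) ≤ κ * ‖ψ‖ := by positivity
      nlinarith
    nlinarith
  have hSle : finrank ℂ S ≤ 1 := by
    have hinj : Function.Injective ((PiLp.projₗ 2 (fun _ : Λ => ℂ) i₀).comp S.subtype) := by
      rw [← LinearMap.ker_eq_bot, Submodule.eq_bot_iff]
      rintro ⟨ψ, hψS⟩ hx
      have hψ0 : ψ i₀ = 0 := hx
      have := hker ψ hψS hψ0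
      exact Subtype.ext this
    have := LinearMap.finrank_le_finrank_of_injective hinj
    simpa using this
  omega
end

section
/- With the hypotheses of the previous statement (|W(n) − W(0)| ≥ κ for n ≠ 0, H = λT + W, λ < κ/(2‖T‖)), let ψ be a normalized eigenvector of H with eigenvalue E₁ satisfying |E₁ − W(0)| ≤ λ‖T‖ < κ/2. Then Σ_{n ≠ 0} |ψ(n)|² ≤ λ‖T‖/κ, and consequently |ψ(0)|² ≥ 1 − λ‖T‖/κ. -/
set_option maxHeartbeats 1000000


/-- Eigenfunction localization at the initial scale: under the separation hypothesis,
the normalized eigenvector with eigenvalue near `W 0` is concentrated at the site `0`. -/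
theorem initial_eigenfunction_localization
    {d : ℕ} (Λ : Finset (Fin d → ℤ)) (h0 : (0 : Fin d → ℤ) ∈ Λ)
    (W : (Fin d → ℤ) → ℝ) (κ lam : ℝ) (hκ : 0 < κ)
    (T : EuclideanSpace ℂ Λ →L[ℂ] EuclideanSpace ℂ Λ) (hT : IsSelfAdjoint T)
    (hsep : ∀ n : Λ, (n : Fin d → ℤ) ≠ 0 → κ ≤ |W n - W 0|)
    (hlam : 0 < lam) (hlam' : lam < κ / (2 * ‖T‖))
    (H : EuclideanSpace ℂ Λ →ₗ[ℂ] EuclideanSpace ℂ Λ)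
    (hHdef : ∀ (ψ : EuclideanSpace ℂ Λ) (n : Λ),
      H ψ n = (lam : ℂ) * T ψ n + (W n : ℂ) * ψ n)
    (ψ : EuclideanSpace ℂ Λ) (hψ : ‖ψ‖ = 1)
    (E₁ : ℝ) (hev : H ψ = (E₁ : ℂ) • ψ)
    (hE₁ : |E₁ - W 0| ≤ lam * ‖T‖) (hhalf : lam * ‖T‖ < κ / 2) :
    (∑ n ∈ Finset.univ.filter (fun n : Λ => (n : Fin d → ℤ) ≠ 0), ‖ψ n‖ ^ 2)
      ≤ lam * ‖T‖ / κ ∧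
    1 - lam * ‖T‖ / κ ≤ ‖ψ ⟨0, h0⟩‖ ^ 2 := by
  classical
  set a : ℝ := lam * ‖T‖ with ha
  set b : ℝ := |E₁ - W 0| with hb
  set z : Λ := ⟨0, h0⟩ with hz
  have hb0 : 0 ≤ b := abs_nonneg _
  have hba : b ≤ a := hE₁
  have ha0 : 0 ≤ a := hb0.trans hba
  -- pointwise identity
  have key : ∀ n : Λ, |W n - E₁| * ‖ψ n‖ = lam * ‖T ψ n‖ := by
    intro n
    have h1 : (E₁ : ℂ) * ψ n = (lam : ℂ) * T ψ n + (W n : ℂ) * ψ n := by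
      have h2 := hHdef ψ n
      rw [hev] at h2
      simpa using h2
    have h2 : ((W (n : Fin d → ℤ) - E₁ : ℝ) : ℂ) * ψ n = -((lam : ℂ) * T ψ n) := by
      push_cast
      linear_combination -h1
    calc |W n - E₁| * ‖ψ n‖ = ‖((W (n : Fin d → ℤ) - E₁ : ℝ) : ℂ) * ψ n‖ := by
          rw [norm_mul, Complex.norm_real, Real.norm_eq_abs]
      _ = ‖(lam : ℂ) * T ψ n‖ := by rw [h2, norm_neg]
      _ = lam * ‖T ψ n‖ := by
          rw [norm_mul, Complex.norm_real, Real.norm_eq_abs, abs_of_pos hlam]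
  -- squared version
  have keysq : ∀ n : Λ, |W n - E₁| ^ 2 * ‖ψ n‖ ^ 2 = lam ^ 2 * ‖T ψ n‖ ^ 2 := by
    intro n
    calc |W n - E₁| ^ 2 * ‖ψ n‖ ^ 2 = (|W (n : Fin d → ℤ) - E₁| * ‖ψ n‖) ^ 2 := by ring
      _ = (lam * ‖T ψ n‖) ^ 2 := by rw [key n]
      _ = lam ^ 2 * ‖T ψ n‖ ^ 2 := by ring
  -- norms as sums
  have hψsum : ∑ n : Λ, ‖ψ n‖ ^ 2 = 1 := by
    have := PiLp.norm_sq_eq_of_L2 (fun _ : Λ => ℂ) ψ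
    rw [hψ] at this
    simpa using this.symm
  have hTψsum : ∑ n : Λ, ‖T ψ n‖ ^ 2 ≤ ‖T‖ ^ 2 := by
    have h1 : ‖T ψ‖ ≤ ‖T‖ := by
      calc ‖T ψ‖ ≤ ‖T‖ * ‖ψ‖ := T.le_opNorm ψ
        _ = ‖T‖ := by rw [hψ, mul_one]
    have h2 := PiLp.norm_sq_eq_of_L2 (fun _ : Λ => ℂ) (T ψ)
    rw [← h2]
    exact pow_le_pow_left₀ (norm_nonneg _) h1 2
  -- split sums
  have hfilter : Finset.univ.filter (fun n : Λ => ¬ (n : Fin d → ℤ) ≠ 0) = {z} := by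
    ext n
    simp [Subtype.ext_iff, hz]
  have hsplit : ∀ f : Λ → ℝ,
      (∑ n ∈ Finset.univ.filter (fun n : Λ => (n : Fin d → ℤ) ≠ 0), f n) + f z
        = ∑ n : Λ, f n := by
    intro f
    rw [← Finset.sum_filter_add_sum_filter_not Finset.univ (fun n : Λ => (n : Fin d → ℤ) ≠ 0) f,
      hfilter, Finset.sum_singleton]
  set S : ℝ := ∑ n ∈ Finset.univ.filter (fun n : Λ => (n : Fin d → ℤ) ≠ 0), ‖ψ n‖ ^ 2 with hS
  have hS0 : 0 ≤ S := Finset.sum_nonneg fun n _ => sq_nonneg _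
  have hψz : ‖ψ z‖ ^ 2 = 1 - S := by
    have := hsplit (fun n => ‖ψ n‖ ^ 2)
    rw [hψsum] at this
    linarith
  -- site-0 identity
  have hzW : W (z : Fin d → ℤ) = W 0 := by rw [hz]
  have hsite0 : lam ^ 2 * ‖T ψ z‖ ^ 2 = b ^ 2 * ‖ψ z‖ ^ 2 := by
    have := keysq z
    rw [hzW] at this
    rw [← this, hb, abs_sub_comm]
  -- pointwise bound on filter
  have hpoint : ∀ n ∈ Finset.univ.filter (fun n : Λ => (n : Fin d → ℤ) ≠ 0),
      (κ - b) ^ 2 * ‖ψ n‖ ^ 2 ≤ lam ^ 2 * ‖T ψ n‖ ^ 2 := by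
    intro n hn
    rw [Finset.mem_filter] at hn
    have h1 : κ ≤ |W n - W 0| := hsep n hn.2
    have h2 : |W n - W 0| - b ≤ |W n - E₁| := by
      have := abs_sub_abs_le_abs_sub (W n - W 0) (E₁ - W 0)
      rw [hb, abs_sub_comm E₁ (W 0)] at *
      have h3 : W (n : Fin d → ℤ) - W 0 - (E₁ - W 0) = W n - E₁ := by ring
      rw [h3] at this
      linarith [this]
    have h4 : κ - b ≤ |W n - E₁| := by linarith
    have h5 : (κ - b) ^ 2 ≤ |W n - E₁| ^ 2 := by
      have hbκ : 0 ≤ κ - b := by linarith [hhalf, hba]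
      nlinarith
    have := keysq n
    nlinarith [sq_nonneg (‖ψ n‖)]
  -- main sum inequality
  have hmain : (κ - b) ^ 2 * S ≤ a ^ 2 - b ^ 2 * (1 - S) := by
    set Q : ℝ := ∑ n ∈ Finset.univ.filter (fun n : Λ => (n : Fin d → ℤ) ≠ 0),
      lam ^ 2 * ‖T ψ n‖ ^ 2 with hQ
    set R : ℝ := ∑ n : Λ, lam ^ 2 * ‖T ψ n‖ ^ 2 with hR
    have h1 : (κ - b) ^ 2 * S ≤ Q := by
      rw [hS, hQ, Finset.mul_sum]
      exact Finset.sum_le_sum hpoint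
    have h2 : Q + lam ^ 2 * ‖T ψ z‖ ^ 2 = R := hsplit _
    have h3 : R ≤ a ^ 2 := by
      rw [hR, ← Finset.mul_sum]
      calc lam ^ 2 * ∑ n : Λ, ‖T ψ n‖ ^ 2 ≤ lam ^ 2 * ‖T‖ ^ 2 :=
            mul_le_mul_of_nonneg_left hTψsum (sq_nonneg lam)
        _ = a ^ 2 := by rw [ha]; ring
    rw [hsite0, hψz] at h2
    linarith
  -- conclude
  have hfinal : S ≤ a / κ := by
    rw [le_div_iff₀ hκ]
    nlinarith [sq_nonneg (a - b), mul_nonneg ha0 (by linarith : (0:ℝ) ≤ κ - 2 * a),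
      mul_nonneg hS0 hb0, mul_pos hκ hκ, mul_nonneg (mul_nonneg hS0 hb0) hb0]
  exact ⟨hfinal, by rw [hψz] at *; linarith⟩
end

section
/- Let H be a self-adjoint operator on a Hilbert space, E an eigenvalue with normalized eigenvector ψ, δ > 0, and assume E is δ-simple, i.e., the spectral projection of H onto [E − δ, E + δ] has rank 1. If φ₁ is a unit vector with ‖(H − E)φ₁‖ ≤ ε and ‖φ₁‖ ≥ 1 − ε for some ε < δ/20, then writing φ₁ = ⟨ψ, φ₁⟩ψ + φ₁^⊥ with φ₁^⊥ ⊥ ψ, one has ‖(H − E)φ₁^⊥‖ ≥ δ‖φ₁^⊥‖, and hence |⟨ψ, φ₁⟩| ≥ ‖φ₁‖ − (10/δ)·ε. -/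
open Module

/-- If `E` is a `δ`-simple eigenvalue of `H` with normalized eigenvector `ψ`, and `φ₁`
is an approximate eigenvector at energy `E` with error `ε < δ/20`, then the component
of `φ₁` orthogonal to `ψ` satisfies `‖(H−E)φ₁^⊥‖ ≥ δ‖φ₁^⊥‖`, and consequently
`|⟨ψ, φ₁⟩| ≥ ‖φ₁‖ − (10/δ)ε`. -/
theorem overlap_with_simple_eigenvector
    {V : Type*} [NormedAddCommGroup V] [InnerProductSpace ℂ V] [FiniteDimensional ℂ V]
    (H : V →ₗ[ℂ] V) (hH : H.IsSymmetric)
    (E δ ε : ℝ) (hδ : 0 < δ) (hε : 0 ≤ ε) (hεδ : ε < δ / 20)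
    (ψ : V) (hψ : ‖ψ‖ = 1) (hev : H ψ = (E : ℂ) • ψ)
    (hsimple : finrank ℂ
      (⨆ μ ∈ Set.Icc (E - δ) (E + δ),
        Module.End.eigenspace H (μ : ℂ) : Submodule ℂ V) = 1)
    (φ₁ : V) (hφ₁unit : ‖φ₁‖ = 1)
    (happrox : ‖H φ₁ - (E : ℂ) • φ₁‖ ≤ ε) (hφ₁lb : 1 - ε ≤ ‖φ₁‖) :
    δ * ‖φ₁ - (inner ℂ ψ φ₁ : ℂ) • ψ‖
        ≤ ‖H (φ₁ - (inner ℂ ψ φ₁ : ℂ) • ψ) - (E : ℂ) • (φ₁ - (inner ℂ ψ φ₁ : ℂ) • ψ)‖ ∧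
    ‖φ₁‖ - (10 / δ) * ε ≤ ‖(inner ℂ ψ φ₁ : ℂ)‖ := by
  set a : ℂ := (inner ℂ ψ φ₁ : ℂ) with ha
  set w : V := φ₁ - a • ψ with hwdef
  have hψne : ψ ≠ 0 := by
    intro h; rw [h, norm_zero] at hψ; norm_num at hψ
  set S : Submodule ℂ V :=
    (⨆ μ ∈ Set.Icc (E - δ) (E + δ), Module.End.eigenspace H (μ : ℂ)) with hS
  -- ψ generates S
  have hψS : ψ ∈ S := by
    apply Submodule.mem_iSup_of_mem E
    apply Submodule.mem_iSup_of_mem (by constructor <;> linarith)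
    rw [Module.End.mem_eigenspace_iff]; exact hev
  have hspan : Submodule.span ℂ {ψ} = S := by
    apply Submodule.eq_of_le_of_finrank_eq
    · rw [Submodule.span_le, Set.singleton_subset_iff]; exact hψS
    · rw [finrank_span_singleton hψne, hsimple]
  -- w ⊥ ψ
  have hwperp : (inner ℂ ψ w : ℂ) = 0 := by
    have : (inner ℂ ψ ψ : ℂ) = 1 := by
      rw [inner_self_eq_norm_sq_to_K, hψ]; norm_num
    rw [hwdef, inner_sub_right, inner_smul_right, this, mul_one, sub_self]
  -- eigenvector basis
  set n := finrank ℂ V with hn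
  set b := hH.eigenvectorBasis hn.symm with hb
  set μ := hH.eigenvalues hn.symm with hμ
  have hnorm : ∀ v : V, ‖v‖ ^ 2 = ∑ i, ‖b.repr v i‖ ^ 2 := by
    intro v
    rw [← b.repr.norm_map v, EuclideanSpace.norm_eq,
      Real.sq_sqrt (by positivity : (0:ℝ) ≤ ∑ i, ‖b.repr v i‖ ^ 2)]
  -- coefficients of w vanish on eigenvalues near E
  have hcoeff0 : ∀ i, μ i ∈ Set.Icc (E - δ) (E + δ) → b.repr w i = 0 := by
    intro i hi
    have hbi : b i ∈ S := by
      apply Submodule.mem_iSup_of_mem (μ i)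
      apply Submodule.mem_iSup_of_mem hi
      exact (hH.hasEigenvector_eigenvectorBasis hn.symm i).1
    rw [← hspan, Submodule.mem_span_singleton] at hbi
    obtain ⟨c, hc⟩ := hbi
    rw [b.repr_apply_apply, ← hc, inner_smul_left, hwperp, mul_zero]
  -- action of H - E on coefficients
  have hcoeffH : ∀ i,
      b.repr (H w - (E : ℂ) • w) i = ((μ i : ℂ) - E) * b.repr w i := by
    intro i
    rw [b.repr_apply_apply, b.repr_apply_apply, inner_sub_right, inner_smul_right,
      ← hH (b i) w, hH.apply_eigenvectorBasis hn.symm i, inner_smul_left]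
    rw [RCLike.conj_ofReal, ← hμ]
    simp only [Complex.coe_algebraMap]
    ring
  -- key inequality, squared
  have hsq : (δ * ‖w‖) ^ 2 ≤ ‖H w - (E : ℂ) • w‖ ^ 2 := by
    rw [mul_pow, hnorm w, hnorm (H w - (E : ℂ) • w), Finset.mul_sum]
    apply Finset.sum_le_sum
    intro i _
    by_cases hi : μ i ∈ Set.Icc (E - δ) (E + δ)
    · rw [hcoeff0 i hi]
      simp
    · rw [hcoeffH i, norm_mul, mul_pow]
      have h1 : δ ≤ ‖((μ i : ℂ) - E)‖ := by
        have : ((μ i : ℂ) - E) = ((μ i - E : ℝ) : ℂ) := by push_cast; ring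
        rw [this, Complex.norm_real, Real.norm_eq_abs]
        rw [Set.mem_Icc, not_and_or, not_le, not_le] at hi
        rcases hi with h | h
        · rw [abs_sub_comm, abs_of_pos (by linarith)]; linarith
        · rw [abs_of_pos (by linarith)]; linarith
      have h2 : δ ^ 2 ≤ ‖((μ i : ℂ) - E)‖ ^ 2 := by
        apply pow_le_pow_left₀ hδ.le h1
      exact mul_le_mul_of_nonneg_right h2 (by positivity)
  have hkey : δ * ‖w‖ ≤ ‖H w - (E : ℂ) • w‖ := by
    have h1 : 0 ≤ δ * ‖w‖ := by positivity
    nlinarith [norm_nonneg (H w - (E : ℂ) • w)]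
  refine ⟨hkey, ?_⟩
  -- (H - E) w = (H - E) φ₁
  have heq : H w - (E : ℂ) • w = H φ₁ - (E : ℂ) • φ₁ := by
    rw [hwdef, map_sub, map_smul, hev]
    module
  have hwsmall : ‖w‖ ≤ ε / δ := by
    rw [heq] at hkey
    have := le_trans hkey happrox
    rw [le_div_iff₀ hδ]
    nlinarith
  have htri : ‖φ₁‖ ≤ ‖a‖ + ‖w‖ := by
    calc ‖φ₁‖ = ‖a • ψ + w‖ := by rw [hwdef]; congr 1; abel
    _ ≤ ‖a • ψ‖ + ‖w‖ := norm_add_le _ _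
    _ = ‖a‖ + ‖w‖ := by rw [norm_smul, hψ, mul_one]
  have h10 : ε / δ ≤ (10 / δ) * ε := by
    rw [div_mul_eq_mul_div, div_le_div_iff₀ hδ hδ]
    nlinarith
  linarith
end

section
/- Let H be a self-adjoint operator on a Hilbert space, ψ a unit vector, E ∈ ℝ, and ρ > 0. Suppose every eigenvector φ of H with eigenvalue in [E − ρ, E + ρ] and ‖φ‖ = 1 satisfies ‖φ − cψ‖ ≤ θ for some unimodular constant c = c(φ), with θ < 1/√8. Then the spectral projection of H onto [E − ρ, E + ρ] has rank at most 1. -/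
open Module

open scoped InnerProductSpace

lemma key_orth {V : Type*} [NormedAddCommGroup V] [InnerProductSpace ℂ V]
    (θ : ℝ) (hθ : 0 ≤ θ) (hθ' : θ < 1 / Real.sqrt 8)
    (ψ φ₁ φ₂ : V) (hψ : ‖ψ‖ = 1) (h1 : ‖φ₁‖ = 1) (h2 : ‖φ₂‖ = 1)
    (horth : ⟪φ₁, φ₂⟫_ℂ = 0)
    (c₁ c₂ : ℂ) (hc₁ : ‖c₁‖ = 1) (hc₂ : ‖c₂‖ = 1)
    (hd₁ : ‖φ₁ - c₁ • ψ‖ ≤ θ) (hd₂ : ‖φ₂ - c₂ • ψ‖ ≤ θ) : False := by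
  set d₁ := φ₁ - c₁ • ψ with hd1def
  set d₂ := φ₂ - c₂ • ψ with hd2def
  have e₁ : c₁ • ψ = φ₁ - d₁ := by simp [hd1def]
  have e₂ : c₂ • ψ = φ₂ - d₂ := by simp [hd2def]
  have expand : ⟪c₁ • ψ, c₂ • ψ⟫_ℂ = - ⟪φ₁, d₂⟫_ℂ - ⟪d₁, φ₂⟫_ℂ + ⟪d₁, d₂⟫_ℂ := by
    rw [e₁, e₂]
    simp [inner_sub_left, inner_sub_right, horth]
    ring
  have hval : ‖⟪c₁ • ψ, c₂ • ψ⟫_ℂ‖ = 1 := by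
    rw [inner_smul_left, inner_smul_right, inner_self_eq_norm_sq_to_K]
    simp [hψ, hc₁, hc₂]
  have t1 : ‖⟪φ₁, d₂⟫_ℂ‖ ≤ θ :=
    (norm_inner_le_norm _ _).trans (by rw [h1, one_mul]; exact hd₂)
  have t2 : ‖⟪d₁, φ₂⟫_ℂ‖ ≤ θ :=
    (norm_inner_le_norm _ _).trans (by rw [h2, mul_one]; exact hd₁)
  have t3 : ‖⟪d₁, d₂⟫_ℂ‖ ≤ θ * θ :=
    (norm_inner_le_norm _ _).trans (mul_le_mul hd₁ hd₂ (norm_nonneg _) hθ)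
  have hbound : ‖⟪c₁ • ψ, c₂ • ψ⟫_ℂ‖ ≤ θ + θ + θ * θ := by
    rw [expand]
    calc ‖- ⟪φ₁, d₂⟫_ℂ - ⟪d₁, φ₂⟫_ℂ + ⟪d₁, d₂⟫_ℂ‖
        ≤ ‖- ⟪φ₁, d₂⟫_ℂ - ⟪d₁, φ₂⟫_ℂ‖ + ‖⟪d₁, d₂⟫_ℂ‖ := norm_add_le _ _
      _ ≤ θ + θ + θ * θ := by
          have := norm_sub_le (- ⟪φ₁, d₂⟫_ℂ) ⟪d₁, φ₂⟫_ℂ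
          rw [norm_neg] at this
          linarith
  rw [hval] at hbound
  have hs : Real.sqrt 8 ^ 2 = 8 := Real.sq_sqrt (by norm_num)
  have hs0 : (0:ℝ) < Real.sqrt 8 := Real.sqrt_pos.mpr (by norm_num)
  have hsl : (2.8:ℝ) ≤ Real.sqrt 8 := by nlinarith
  have : θ < 1 / 2.8 :=
    lt_of_lt_of_le hθ' (one_div_le_one_div_of_le (by norm_num) hsl)
  nlinarith


/-- Rank-one (simplicity) argument: if every normalized eigenvector of `H` with
eigenvalue in `[E − ρ, E + ρ]` is within `θ < 1/√8` of a unimodular multiple of a fixed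
unit vector `ψ`, then the spectral projection of `H` onto `[E − ρ, E + ρ]` has rank at
most 1. -/
theorem rank_one_from_closeness
    {V : Type*} [NormedAddCommGroup V] [InnerProductSpace ℂ V] [FiniteDimensional ℂ V]
    (H : V →ₗ[ℂ] V) (hH : H.IsSymmetric)
    (E ρ θ : ℝ) (hρ : 0 < ρ) (hθ : 0 ≤ θ) (hθ' : θ < 1 / Real.sqrt 8)
    (ψ : V) (hψ : ‖ψ‖ = 1)
    (hclose : ∀ (φ : V) (μ : ℝ), μ ∈ Set.Icc (E - ρ) (E + ρ) → ‖φ‖ = 1 →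
      H φ = (μ : ℂ) • φ → ∃ c : ℂ, ‖c‖ = 1 ∧ ‖φ - c • ψ‖ ≤ θ) :
    finrank ℂ
      (⨆ μ ∈ Set.Icc (E - ρ) (E + ρ),
        Module.End.eigenspace H (μ : ℂ) : Submodule ℂ V) ≤ 1 := by
  by_cases hbot : ∀ μ ∈ Set.Icc (E - ρ) (E + ρ), Module.End.eigenspace H (μ : ℂ) = ⊥
  · have : (⨆ μ ∈ Set.Icc (E - ρ) (E + ρ),
        Module.End.eigenspace H (μ : ℂ) : Submodule ℂ V) = ⊥ := by
      simp only [iSup_eq_bot]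
      exact hbot
    rw [this]; simp
  · push_neg at hbot
    obtain ⟨μ₀, hμ₀, hne⟩ := hbot
    obtain ⟨φ₀', hφ₀'mem, hφ₀'ne⟩ := Submodule.exists_mem_ne_zero_of_ne_bot hne
    set φ₀ : V := (‖φ₀'‖ : ℂ)⁻¹ • φ₀' with hφ₀def
    have hφ₀norm : ‖φ₀‖ = 1 := by
      rw [hφ₀def, norm_smul]
      simp [norm_ne_zero_iff.mpr hφ₀'ne]
    have hφ₀ne : φ₀ ≠ 0 := by
      intro h; rw [h] at hφ₀norm; simp at hφ₀norm
    have hφ₀eig : H φ₀ = (μ₀ : ℂ) • φ₀ := by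
      have := Module.End.mem_eigenspace_iff.mp hφ₀'mem
      rw [hφ₀def, map_smul, this, smul_comm]
    obtain ⟨c₀, hc₀, hdc₀⟩ := hclose φ₀ μ₀ hμ₀ hφ₀norm hφ₀eig
    -- any eigenvector orthogonal to φ₀ with eigenvalue in the interval is zero
    have orth_zero : ∀ (φ : V) (μ : ℝ), μ ∈ Set.Icc (E - ρ) (E + ρ) →
        H φ = (μ : ℂ) • φ → ⟪φ₀, φ⟫_ℂ = 0 → φ = 0 := by
      intro φ μ hμ heig horth
      by_contra hφne
      set u : V := (‖φ‖ : ℂ)⁻¹ • φ with hudef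
      have hunorm : ‖u‖ = 1 := by
        rw [hudef, norm_smul]; simp [norm_ne_zero_iff.mpr hφne]
      have hueig : H u = (μ : ℂ) • u := by
        rw [hudef, map_smul, heig, smul_comm]
      have huorth : ⟪φ₀, u⟫_ℂ = 0 := by
        rw [hudef, inner_smul_right, horth, mul_zero]
      obtain ⟨c, hc, hdc⟩ := hclose u μ hμ hunorm hueig
      exact key_orth θ hθ hθ' ψ φ₀ u hψ hφ₀norm hunorm huorth c₀ c hc₀ hc hdc₀ hdc
    -- the whole iSup is contained in the span of φ₀
    have hle : (⨆ μ ∈ Set.Icc (E - ρ) (E + ρ),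
        Module.End.eigenspace H (μ : ℂ) : Submodule ℂ V) ≤ Submodule.span ℂ {φ₀} := by
      refine iSup_le fun μ => iSup_le fun hμ => ?_
      intro φ hφ
      have heig : H φ = (μ : ℂ) • φ := Module.End.mem_eigenspace_iff.mp hφ
      by_cases hcase : μ = μ₀
      · subst hcase
        have heig' : H (φ - ⟪φ₀, φ⟫_ℂ • φ₀) = (μ : ℂ) • (φ - ⟪φ₀, φ⟫_ℂ • φ₀) := by
          rw [map_sub, map_smul, heig, hφ₀eig, smul_sub, smul_comm]
        have horth' : ⟪φ₀, φ - ⟪φ₀, φ⟫_ℂ • φ₀⟫_ℂ = 0 := by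
          rw [inner_sub_right, inner_smul_right, inner_self_eq_norm_sq_to_K, hφ₀norm]
          push_cast; ring
        have hz := orth_zero _ μ hμ heig' horth'
        rw [sub_eq_zero.mp hz]
        exact Submodule.smul_mem _ _ (Submodule.mem_span_singleton_self φ₀)
      · -- distinct eigenvalues: φ is orthogonal to φ₀, hence zero
        have horth : ⟪φ₀, φ⟫_ℂ = 0 := by
          have hsym := hH φ₀ φ
          rw [hφ₀eig, heig, inner_smul_left, inner_smul_right] at hsym
          have hconj : (starRingEnd ℂ) (μ₀ : ℂ) = (μ₀ : ℂ) := Complex.conj_ofReal μ₀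
          rw [hconj] at hsym
          have hμne : (μ₀ : ℂ) ≠ (μ : ℂ) := by
            simpa using fun h => hcase (by exact_mod_cast h.symm)
          have := sub_eq_zero.mpr hsym
          rw [← sub_mul] at this
          rcases mul_eq_zero.mp this with h | h
          · exact absurd (sub_eq_zero.mp h) hμne
          · exact h
        have := orth_zero φ μ hμ heig horth
        rw [this]; exact Submodule.zero_mem _
    calc finrank ℂ (⨆ μ ∈ Set.Icc (E - ρ) (E + ρ),
          Module.End.eigenspace H (μ : ℂ) : Submodule ℂ V)
        ≤ finrank ℂ (Submodule.span ℂ {φ₀}) := Submodule.finrank_mono hle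
      _ = 1 := finrank_span_singleton hφ₀ne
end

section
/- Let H and H̃ be self-adjoint operators on a finite-dimensional Hilbert space with ‖H − H̃‖ ≤ δ/4. If E is a δ-simple eigenvalue of H (the spectral projection of H onto [E−δ, E+δ] has rank 1), then H̃ has exactly one eigenvalue Ẽ in [E − δ/2, E + δ/2], this eigenvalue is (δ/2)-simple for H̃, and |Ẽ − E| ≤ ‖H − H̃‖. -/
open Module

section Helpers

variable {V : Type*} [NormedAddCommGroup V] [InnerProductSpace ℂ V] [FiniteDimensional ℂ V]
variable {n : ℕ}

/-- Parseval: norm squared via orthonormal basis coordinates. -/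
lemma helper_norm_sq_repr (b : OrthonormalBasis (Fin n) ℂ V) (x : V) :
    ‖x‖ ^ 2 = ∑ i, ‖b.repr x i‖ ^ 2 := by
  rw [← b.repr.norm_map x, EuclideanSpace.norm_eq,
    Real.sq_sqrt (Finset.sum_nonneg fun i _ => sq_nonneg _)]

lemma helper_repr_shift {T : V →L[ℂ] V} (hT : (T : V →ₗ[ℂ] V).IsSymmetric)
    (hn : finrank ℂ V = n) (E : ℝ) (x : V) (i : Fin n) :
    (hT.eigenvectorBasis hn).repr (T x - (E : ℂ) • x) i
      = ((hT.eigenvalues hn i - E : ℝ) : ℂ) * (hT.eigenvectorBasis hn).repr x i := by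
  have h1 := hT.eigenvectorBasis_apply_self_apply hn x i
  rw [map_sub, map_smul]
  simp only [PiLp.sub_apply, PiLp.smul_apply, smul_eq_mul]
  rw [show ((T : V →ₗ[ℂ] V) x) = T x from rfl] at h1
  rw [h1]
  simp only [show ((RCLike.ofReal : ℝ → ℂ)) = Complex.ofReal from rfl] at *
  push_cast
  ring

lemma helper_norm_sq_shift {T : V →L[ℂ] V} (hT : (T : V →ₗ[ℂ] V).IsSymmetric)
    (hn : finrank ℂ V = n) (E : ℝ) (x : V) :
    ‖T x - (E : ℂ) • x‖ ^ 2
      = ∑ i, (hT.eigenvalues hn i - E) ^ 2 * ‖(hT.eigenvectorBasis hn).repr x i‖ ^ 2 := by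
  rw [helper_norm_sq_repr (hT.eigenvectorBasis hn)]
  refine Finset.sum_congr rfl fun i _ => ?_
  rw [helper_repr_shift hT hn E x i, norm_mul, Complex.norm_real, Real.norm_eq_abs, mul_pow, sq_abs]

lemma helper_eigenspace_le_span {T : V →L[ℂ] V} (hT : (T : V →ₗ[ℂ] V).IsSymmetric)
    (hn : finrank ℂ V = n) (μ : ℂ) :
    Module.End.eigenspace (T : V →ₗ[ℂ] V) μ ≤
      Submodule.span ℂ (hT.eigenvectorBasis hn '' {i | (hT.eigenvalues hn i : ℂ) = μ}) := by
  intro x hx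
  have hx' : T x = μ • x := Module.End.mem_eigenspace_iff.mp hx
  rw [← (hT.eigenvectorBasis hn).sum_repr x]
  refine Submodule.sum_mem _ fun i _ => ?_
  by_cases h : (hT.eigenvectorBasis hn).repr x i = 0
  · rw [h, zero_smul]; exact Submodule.zero_mem _
  · refine Submodule.smul_mem _ _ (Submodule.subset_span ⟨i, ?_, rfl⟩)
    have h1 := hT.eigenvectorBasis_apply_self_apply hn x i
    rw [show ((T : V →ₗ[ℂ] V) x) = T x from rfl, hx', map_smul] at h1
    simp only [PiLp.smul_apply, smul_eq_mul] at h1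
    exact (mul_right_cancel₀ h h1.symm)

lemma helper_exists_index {T : V →L[ℂ] V} (hT : (T : V →ₗ[ℂ] V).IsSymmetric)
    (hn : finrank ℂ V = n) (μ : ℝ)
    (hne : Module.End.eigenspace (T : V →ₗ[ℂ] V) (μ : ℂ) ≠ ⊥) :
    ∃ i, hT.eigenvalues hn i = μ := by
  by_contra hcon
  push_neg at hcon
  apply hne
  rw [← le_bot_iff]
  refine le_trans (helper_eigenspace_le_span hT hn (μ : ℂ)) ?_
  have : {i | (hT.eigenvalues hn i : ℂ) = (μ : ℂ)} = ∅ := by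
    ext i
    simp only [Set.mem_setOf_eq, Set.mem_empty_iff_false, iff_false]
    exact fun h => hcon i (Complex.ofReal_inj.mp h)
  rw [this, Set.image_empty, Submodule.span_empty]

lemma helper_iSup_eq_span {T : V →L[ℂ] V} (hT : (T : V →ₗ[ℂ] V).IsSymmetric)
    (hn : finrank ℂ V = n) (a b' : ℝ) :
    (⨆ μ ∈ Set.Icc a b',
        Module.End.eigenspace (T : V →ₗ[ℂ] V) (μ : ℂ) : Submodule ℂ V) =
      Submodule.span ℂ
        (hT.eigenvectorBasis hn '' {i | hT.eigenvalues hn i ∈ Set.Icc a b'}) := by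
  apply le_antisymm
  · refine iSup₂_le fun μ hμ => ?_
    refine le_trans (helper_eigenspace_le_span hT hn (μ : ℂ)) (Submodule.span_mono ?_)
    rintro _ ⟨i, hi, rfl⟩
    refine ⟨i, ?_, rfl⟩
    have : hT.eigenvalues hn i = μ := Complex.ofReal_inj.mp hi
    rw [Set.mem_setOf_eq, this]; exact hμ
  · rw [Submodule.span_le]
    rintro _ ⟨i, hi, rfl⟩
    refine SetLike.mem_coe.mpr
      (Submodule.mem_iSup_of_mem (hT.eigenvalues hn i)
        (Submodule.mem_iSup_of_mem hi ?_))
    exact Module.End.mem_eigenspace_iff.mpr (hT.apply_eigenvectorBasis hn i)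

lemma helper_finrank_span (b : OrthonormalBasis (Fin n) ℂ V) (s : Set (Fin n)) [Fintype s] :
    finrank ℂ (Submodule.span ℂ (b '' s) : Submodule ℂ V) = Fintype.card s := by
  have li : LinearIndependent ℂ (fun x : s => b ↑x) :=
    b.orthonormal.linearIndependent.comp _ Subtype.val_injective
  rw [Set.image_eq_range, finrank_span_eq_card li]

end Helpers

lemma helper_le_of_sq_le_sq {a c : ℝ} (h : a ^ 2 ≤ c ^ 2) (ha : 0 ≤ a) (hc : 0 ≤ c) :
    a ≤ c := by nlinarith

set_option maxHeartbeats 1000000 in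
/-- Stability of `δ`-simple eigenvalues: if `‖H − H̃‖ ≤ δ/4` and `E` is a `δ`-simple
eigenvalue of `H`, then `H̃` has exactly one eigenvalue `Ẽ` in `[E − δ/2, E + δ/2]`,
this eigenvalue is `(δ/2)`-simple for `H̃`, and `|Ẽ − E| ≤ ‖H − H̃‖`. -/
theorem simple_eigenvalue_stability
    {V : Type*} [NormedAddCommGroup V] [InnerProductSpace ℂ V] [FiniteDimensional ℂ V]
    (H Ht : V →L[ℂ] V) (hH : IsSelfAdjoint H) (hHt : IsSelfAdjoint Ht)
    (E δ : ℝ) (hδ : 0 < δ) (hpert : ‖H - Ht‖ ≤ δ / 4)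
    (hevE : Module.End.eigenspace (H : V →ₗ[ℂ] V) (E : ℂ) ≠ ⊥)
    (hsimple : finrank ℂ
      (⨆ μ ∈ Set.Icc (E - δ) (E + δ),
        Module.End.eigenspace (H : V →ₗ[ℂ] V) (μ : ℂ) : Submodule ℂ V) = 1) :
    ∃ Et : ℝ, Et ∈ Set.Icc (E - δ / 2) (E + δ / 2) ∧
      Module.End.eigenspace (Ht : V →ₗ[ℂ] V) (Et : ℂ) ≠ ⊥ ∧
      (∀ μ ∈ Set.Icc (E - δ / 2) (E + δ / 2),
        Module.End.eigenspace (Ht : V →ₗ[ℂ] V) (μ : ℂ) ≠ ⊥ → μ = Et) ∧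
      finrank ℂ
        (⨆ μ ∈ Set.Icc (Et - δ / 2) (Et + δ / 2),
          Module.End.eigenspace (Ht : V →ₗ[ℂ] V) (μ : ℂ) : Submodule ℂ V) = 1 ∧
      |Et - E| ≤ ‖H - Ht‖ := by
  classical
  have hTsym : (H : V →ₗ[ℂ] V).IsSymmetric :=
    ContinuousLinearMap.isSelfAdjoint_iff_isSymmetric.mp hH
  have hTtsym : (Ht : V →ₗ[ℂ] V).IsSymmetric :=
    ContinuousLinearMap.isSelfAdjoint_iff_isSymmetric.mp hHt
  obtain ⟨n, hn⟩ : ∃ n, finrank ℂ V = n := ⟨_, rfl⟩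
  set b := hTsym.eigenvectorBasis hn with hbdef
  set α := hTsym.eigenvalues hn with hαdef
  set c := hTtsym.eigenvectorBasis hn with hcdef
  set β := hTtsym.eigenvalues hn with hβdef
  set ε := ‖H - Ht‖ with hεdef
  have hε0 : 0 ≤ ε := norm_nonneg _
  have hε4 : ε ≤ δ / 4 := hpert
  -- unique index for H in [E-δ, E+δ]
  rw [helper_iSup_eq_span hTsym hn, helper_finrank_span] at hsimple
  obtain ⟨⟨i₀, hi₀mem⟩, hi₀uniq⟩ := Fintype.card_eq_one_iff.mp hsimple
  have huniq : ∀ m, α m ∈ Set.Icc (E - δ) (E + δ) → m = i₀ := fun m hm =>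
    congrArg Subtype.val (hi₀uniq ⟨m, hm⟩)
  have hout : ∀ m, m ≠ i₀ → δ < |α m - E| := by
    intro m hm
    by_contra h
    push_neg at h
    have := abs_le.mp h
    exact hm (huniq m ⟨by linarith [this.1], by linarith [this.2]⟩)
  -- α i₀ = E
  obtain ⟨m0, hm0⟩ := helper_exists_index hTsym hn E hevE
  have hm0' : α m0 = E := hm0
  have hαi₀ : α i₀ = E := by
    have : m0 = i₀ := huniq m0 ⟨by rw [hm0']; linarith, by rw [hm0']; linarith⟩
    rw [← this, hm0']
  -- existence of an eigenvalue of Ht within ε of E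
  have hv1 : ‖b i₀‖ = 1 := b.orthonormal.1 i₀
  have hvH : H (b i₀) = (E : ℂ) • b i₀ := by
    have h := hTsym.apply_eigenvectorBasis hn i₀
    rw [← hbdef, ← hαdef, hαi₀] at h
    exact h
  have hnorm1 : ‖Ht (b i₀) - (E : ℂ) • b i₀‖ ≤ ε := by
    rw [← hvH]
    calc ‖Ht (b i₀) - H (b i₀)‖ = ‖(Ht - H) (b i₀)‖ := by
          rw [ContinuousLinearMap.sub_apply]
      _ ≤ ‖Ht - H‖ * ‖b i₀‖ := ContinuousLinearMap.le_opNorm _ _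
      _ = ε := by rw [hv1, mul_one, norm_sub_rev]
  have hj : ∃ j, |β j - E| ≤ ε := by
    by_contra hcon
    push_neg at hcon
    have hsum1 : (1 : ℝ) = ∑ k, ‖c.repr (b i₀) k‖ ^ 2 := by
      rw [← helper_norm_sq_repr c (b i₀), hv1]; norm_num
    have hex : ∃ k, c.repr (b i₀) k ≠ 0 := by
      by_contra hall
      push_neg at hall
      have : (1 : ℝ) = 0 := by
        rw [hsum1]
        exact Finset.sum_eq_zero fun k _ => by rw [hall k]; simp
      norm_num at this
    obtain ⟨k0, hk0⟩ := hex
    have hsq : ∀ k, ε ^ 2 < (β k - E) ^ 2 := fun k => by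
      nlinarith [hcon k, abs_nonneg (β k - E), sq_abs (β k - E)]
    have hlt : ε ^ 2 < ‖Ht (b i₀) - (E : ℂ) • b i₀‖ ^ 2 := by
      have h5 : ε ^ 2 = ε ^ 2 * ∑ k, ‖c.repr (b i₀) k‖ ^ 2 := by
        rw [← hsum1]; ring
      rw [h5, helper_norm_sq_shift hTtsym hn, Finset.mul_sum]
      refine Finset.sum_lt_sum (fun k _ =>
        mul_le_mul_of_nonneg_right (le_of_lt (hsq k)) (sq_nonneg _))
        ⟨k0, Finset.mem_univ k0,
          mul_lt_mul_of_pos_right (hsq k0) (pow_pos (norm_pos_iff.mpr hk0) 2)⟩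
    have h6 : ‖Ht (b i₀) - (E : ℂ) • b i₀‖ ^ 2 ≤ ε ^ 2 :=
      pow_le_pow_left₀ (norm_nonneg _) hnorm1 2
    linarith
  obtain ⟨j₀, hj₀⟩ := hj
  -- key: at most one eigenvalue index of Ht within 3δ/4 of E
  have key : ∀ k₁ k₂, |β k₁ - E| ≤ 3 * δ / 4 → |β k₂ - E| ≤ 3 * δ / 4 → k₁ = k₂ := by
    intro k₁ k₂ hk₁ hk₂
    by_contra hne
    obtain ⟨r₁, r₂, hr, hw0⟩ : ∃ r₁ r₂ : ℂ, (r₁ ≠ 0 ∨ r₂ ≠ 0) ∧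
        r₁ * b.repr (c k₁) i₀ + r₂ * b.repr (c k₂) i₀ = 0 := by
      by_cases hp : b.repr (c k₁) i₀ = 0
      · exact ⟨1, 0, Or.inl one_ne_zero, by rw [hp]; ring⟩
      · exact ⟨b.repr (c k₂) i₀, -(b.repr (c k₁) i₀),
          Or.inr (neg_ne_zero.mpr hp), by ring⟩
    set w := r₁ • c k₁ + r₂ • c k₂ with hwdef
    have hbw0 : b.repr w i₀ = 0 := by
      rw [hwdef, map_add, map_smul, map_smul]
      simpa only [PiLp.add_apply, PiLp.smul_apply, smul_eq_mul] using hw0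
    have hcwg : ∀ k, c.repr w k =
        r₁ * (if k = k₁ then 1 else 0) + r₂ * (if k = k₂ then 1 else 0) := by
      intro k
      rw [hwdef, map_add, map_smul, map_smul]
      simp [OrthonormalBasis.repr_self, EuclideanSpace.single_apply]
    have hcw : ∀ k, k ≠ k₁ → k ≠ k₂ → c.repr w k = 0 := by
      intro k h1 h2
      rw [hcwg k, if_neg h1, if_neg h2]; ring
    have hcw1 : c.repr w k₁ = r₁ := by
      rw [hcwg k₁, if_pos rfl, if_neg hne]; ring
    have hcw2 : c.repr w k₂ = r₂ := by
      rw [hcwg k₂, if_neg (Ne.symm hne), if_pos rfl]; ring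
    have hwne : w ≠ 0 := by
      intro h0
      rcases hr with h | h
      · apply h; rw [← hcw1, h0, map_zero]; rfl
      · apply h; rw [← hcw2, h0, map_zero]; rfl
    have hwpos : 0 < ‖w‖ := norm_pos_iff.mpr hwne
    have hup : ‖Ht w - (E : ℂ) • w‖ ^ 2 ≤ (3 * δ / 4) ^ 2 * ‖w‖ ^ 2 := by
      rw [helper_norm_sq_shift hTtsym hn, helper_norm_sq_repr c, Finset.mul_sum]
      refine Finset.sum_le_sum fun k _ => ?_
      by_cases h1 : k = k₁
      · subst h1
        refine mul_le_mul_of_nonneg_right ?_ (sq_nonneg _)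
        show (β k - E) ^ 2 ≤ (3 * δ / 4) ^ 2
        nlinarith [abs_nonneg (β k - E), sq_abs (β k - E)]
      · by_cases h2 : k = k₂
        · subst h2
          refine mul_le_mul_of_nonneg_right ?_ (sq_nonneg _)
          show (β k - E) ^ 2 ≤ (3 * δ / 4) ^ 2
          nlinarith [abs_nonneg (β k - E), sq_abs (β k - E)]
        · rw [hcw k h1 h2]; simp
    have hup' : ‖Ht w - (E : ℂ) • w‖ ≤ (3 * δ / 4) * ‖w‖ := by
      refine helper_le_of_sq_le_sq ?_ (norm_nonneg _) (by positivity)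
      calc ‖Ht w - (E : ℂ) • w‖ ^ 2 ≤ (3 * δ / 4) ^ 2 * ‖w‖ ^ 2 := hup
        _ = (3 * δ / 4 * ‖w‖) ^ 2 := by ring
    have hHw : ‖H w - (E : ℂ) • w‖ ≤ δ * ‖w‖ := by
      have h3 : H w - (E : ℂ) • w = (Ht w - (E : ℂ) • w) + (H - Ht) w := by
        rw [ContinuousLinearMap.sub_apply]; abel
      rw [h3]
      calc ‖(Ht w - (E : ℂ) • w) + (H - Ht) w‖
          ≤ ‖Ht w - (E : ℂ) • w‖ + ‖(H - Ht) w‖ := norm_add_le _ _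
        _ ≤ (3 * δ / 4) * ‖w‖ + ‖H - Ht‖ * ‖w‖ :=
            add_le_add hup' (ContinuousLinearMap.le_opNorm _ _)
        _ ≤ (3 * δ / 4) * ‖w‖ + (δ / 4) * ‖w‖ := by
            nlinarith [norm_nonneg w, hpert]
        _ = δ * ‖w‖ := by ring
    have hex : ∃ m, b.repr w m ≠ 0 := by
      by_contra hall
      push_neg at hall
      have h4 : ‖w‖ ^ 2 = 0 := by
        rw [helper_norm_sq_repr b w]
        exact Finset.sum_eq_zero fun m _ => by rw [hall m]; simp
      nlinarith
    obtain ⟨m1, hm1⟩ := hex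
    have hm1i : m1 ≠ i₀ := fun h => hm1 (h ▸ hbw0)
    have hlow : δ ^ 2 * ‖w‖ ^ 2 < ‖H w - (E : ℂ) • w‖ ^ 2 := by
      rw [helper_norm_sq_shift hTsym hn, helper_norm_sq_repr b, Finset.mul_sum]
      refine Finset.sum_lt_sum (fun m _ => ?_) ⟨m1, Finset.mem_univ m1, ?_⟩
      · by_cases hm : b.repr w m = 0
        · rw [hm]; simp
        · have hmne : m ≠ i₀ := fun h => hm (h ▸ hbw0)
          have := hout m hmne
          refine mul_le_mul_of_nonneg_right ?_ (sq_nonneg _)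
          show δ ^ 2 ≤ (α m - E) ^ 2
          nlinarith [abs_nonneg (α m - E), sq_abs (α m - E)]
      · have := hout m1 hm1i
        have h4 : δ ^ 2 < (α m1 - E) ^ 2 := by
          nlinarith [sq_abs (α m1 - E), abs_nonneg (α m1 - E)]
        exact mul_lt_mul_of_pos_right h4 (pow_pos (norm_pos_iff.mpr hm1) 2)
    have h6 : ‖H w - (E : ℂ) • w‖ ^ 2 ≤ (δ * ‖w‖) ^ 2 :=
      pow_le_pow_left₀ (norm_nonneg _) hHw 2
    nlinarith [hlow, h6]
  -- conclusions
  have habs := abs_le.mp hj₀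
  refine ⟨β j₀, ⟨by linarith [habs.1], by linarith [habs.2]⟩, ?_, ?_, ?_, hj₀⟩
  · -- eigenspace nonzero
    have hmem : c j₀ ∈ Module.End.eigenspace (Ht : V →ₗ[ℂ] V) ((β j₀ : ℝ) : ℂ) :=
      Module.End.mem_eigenspace_iff.mpr (hTtsym.apply_eigenvectorBasis hn j₀)
    intro hbot
    rw [hbot, Submodule.mem_bot] at hmem
    have h1 : ‖c j₀‖ = 1 := c.orthonormal.1 j₀
    rw [hmem, norm_zero] at h1
    norm_num at h1
  · -- uniqueness
    intro μ hμ hne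
    obtain ⟨k, hk⟩ := helper_exists_index hTtsym hn μ hne
    have hk' : β k = μ := hk
    have hμ' := Set.mem_Icc.mp hμ
    have hk1 : |β k - E| ≤ 3 * δ / 4 := by
      rw [hk']; rw [abs_le]; constructor <;> [linarith [hμ'.1]; linarith [hμ'.2]]
    have hj1 : |β j₀ - E| ≤ 3 * δ / 4 := by
      rw [abs_le]; constructor <;> [linarith [habs.1]; linarith [habs.2]]
    rw [← hk']
    exact congrArg β (key k j₀ hk1 hj1)
  · -- (δ/2)-simplicity at β j₀
    rw [helper_iSup_eq_span hTtsym hn, helper_finrank_span]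
    rw [Fintype.card_eq_one_iff]
    refine ⟨⟨j₀, show β j₀ ∈ Set.Icc (β j₀ - δ / 2) (β j₀ + δ / 2) from
      Set.mem_Icc.mpr ⟨by linarith, by linarith⟩⟩, ?_⟩
    rintro ⟨k, hkmem⟩
    have hkmem' : β k ∈ Set.Icc (β j₀ - δ / 2) (β j₀ + δ / 2) := hkmem
    have hk' := Set.mem_Icc.mp hkmem'
    have hk1 : |β k - E| ≤ 3 * δ / 4 := by
      rw [abs_le]; constructor <;>
        [linarith [hk'.1, habs.1]; linarith [hk'.2, habs.2]]
    have hj1 : |β j₀ - E| ≤ 3 * δ / 4 := by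
      rw [abs_le]; constructor <;> [linarith [habs.1]; linarith [habs.2]]
    exact Subtype.ext (key k j₀ hk1 hj1)
end

section
/- Let H be a bounded self-adjoint operator on L²(𝕋^d) and suppose there exist a measurable set G ⊆ 𝕋^d with |G| > 0, a bounded measurable function γ : G → ℝ, and a bounded operator Q : L²(𝕋^d) → L²(𝕋^d) with Q*Q = QQ* = χ_G (multiplication by the indicator of G) such that HQ = QΓ where Γ is multiplication by χ_G·γ. If moreover |{x ∈ G : γ(x) ∈ [E−s, E+s]}| ≤ Cs for all E ∈ ℝ and s > 0, then H has nonempty absolutely continuous spectrum; more precisely, the essential range of γ on G is contained in σ_ac(H). -/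
open MeasureTheory
open scoped NNReal ENNReal

section AuxAC
open Set
lemma aux_ac (m : Measure ℝ) [IsFiniteMeasure m] (C : ℝ) (hC : 0 ≤ C)
    (h : ∀ a b : ℝ, a ≤ b → m (Set.Ioc a b) ≤ ENNReal.ofReal (C * (b - a))) :
    m ≤ (ENNReal.ofReal C) • (volume : Measure ℝ) := by
  set F : ℝ → ℝ := fun t => (m (Iic t)).toReal with hF
  have hfin : ∀ t, m (Iic t) ≠ ⊤ := fun t => (measure_lt_top m _).ne
  have hIoc : ∀ a b : ℝ, a ≤ b → m (Ioc a b) = m (Iic b) - m (Iic a) := by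
    intro a b hab
    rw [← Set.Iic_sdiff_Iic, measure_diff (Set.Iic_subset_Iic.2 hab)
      measurableSet_Iic.nullMeasurableSet (hfin a)]
  have hFd : ∀ a b : ℝ, a ≤ b → F b - F a = (m (Ioc a b)).toReal := by
    intro a b hab
    rw [hIoc a b hab, ENNReal.toReal_sub_of_le (measure_mono (Set.Iic_subset_Iic.2 hab)) (hfin b)]
  have hmono : Monotone F := by
    intro a b hab
    have := hFd a b hab
    have h0 : (0:ℝ) ≤ (m (Ioc a b)).toReal := ENNReal.toReal_nonneg
    linarith
  have hlip : ∀ a b : ℝ, a ≤ b → F b - F a ≤ C * (b - a) := by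
    intro a b hab
    rw [hFd a b hab]
    have h1 := h a b hab
    have h2 := ENNReal.toReal_mono (by finiteness) h1
    simpa [ENNReal.toReal_ofReal (by nlinarith : (0:ℝ) ≤ C * (b - a))] using h2
  have hcont : Continuous F := by
    have : LipschitzWith C.toNNReal F := by
      apply LipschitzWith.of_dist_le_mul
      intro x y
      rcases le_total x y with hxy | hxy
      · rw [Real.dist_eq, Real.dist_eq, abs_sub_comm (F x) (F y),
          abs_of_nonneg (by linarith [hmono hxy]), abs_sub_comm x y, abs_of_nonneg (by linarith)]
        simpa [Real.coe_toNNReal C hC] using hlip x y hxy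
      · rw [Real.dist_eq, Real.dist_eq, abs_of_nonneg (by linarith [hmono hxy]),
          abs_of_nonneg (by linarith)]
        simpa [Real.coe_toNNReal C hC] using hlip y x hxy
    exact this.continuous
  set SF : StieltjesFunction ℝ :=
    { toFun := F
      mono' := hmono
      right_continuous' := fun x => (hcont.continuousAt).continuousWithinAt } with hSF
  set SG : StieltjesFunction ℝ :=
    { toFun := fun t => C * t - F t
      mono' := by
        intro a b hab
        have := hlip a b hab
        simp only
        nlinarith
      right_continuous' := fun x =>
        (((continuous_const.mul continuous_id).sub hcont).continuousAt).continuousWithinAt } with hSG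
  have hmSF : m = SF.measure := by
    refine Measure.ext_of_Ioc m SF.measure (fun a b hab => ?_)
    rw [StieltjesFunction.measure_Ioc]
    show m (Ioc a b) = ENNReal.ofReal (F b - F a)
    rw [hFd a b hab.le, ENNReal.ofReal_toReal (by finiteness)]
  have hsum : SF.measure + SG.measure = (ENNReal.ofReal C) • (volume : Measure ℝ) := by
    refine Measure.ext_of_Ioc' _ _ (fun a b hab => ?_) (fun a b hab => ?_)
    · rw [Measure.add_apply]
      exact ENNReal.add_ne_top.2 ⟨measure_Ioc_lt_top.ne, measure_Ioc_lt_top.ne⟩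
    rw [Measure.add_apply, StieltjesFunction.measure_Ioc, StieltjesFunction.measure_Ioc]
    have h1 : (0:ℝ) ≤ F b - F a := by linarith [hmono hab.le]
    have h2 : (0:ℝ) ≤ (C * b - F b) - (C * a - F a) := by
      have := hlip a b hab.le; nlinarith
    show ENNReal.ofReal (F b - F a) + ENNReal.ofReal ((C * b - F b) - (C * a - F a)) = _
    rw [← ENNReal.ofReal_add h1 h2, Measure.smul_apply, Real.volume_Ioc, smul_eq_mul,
      ← ENNReal.ofReal_mul hC]
    ring_nf
  intro s
  calc m s = SF.measure s := by rw [hmSF]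
    _ ≤ (SF.measure + SG.measure) s := by simp [Measure.add_apply]
    _ = _ := by rw [hsum]

end AuxAC

set_option maxHeartbeats 1000000

/-- If `Q` is a partial isometry on `L²(𝕋^d)` with `Q*Q = QQ* = χ_G` intertwining the
bounded self-adjoint operator `H` with multiplication by `γ`, and the sublevel sets of
`γ` have measure linear in `s`, then the spectral measure of every vector in the range
of `Q` is absolutely continuous, and the essential range of `γ` on `G` is contained in
the spectrum of `H`; in particular `H` has absolutely continuous spectrum. -/
theorem ac_spectrum_from_intertwining
    {d : ℕ}
    (H Q P Γop : Lp ℂ 2 (volume : Measure (Fin d → AddCircle (1 : ℝ))) →L[ℂ]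
          Lp ℂ 2 (volume : Measure (Fin d → AddCircle (1 : ℝ))))
    (hH : IsSelfAdjoint H)
    (G : Set (Fin d → AddCircle (1 : ℝ))) (hGmeas : MeasurableSet G)
    (hGpos : 0 < volume G)
    (γ : (Fin d → AddCircle (1 : ℝ)) → ℝ) (hγmeas : Measurable γ)
    (Cγ : ℝ) (hγbd : ∀ x, |γ x| ≤ Cγ)
    (hP : ∀ g, (P g : (Fin d → AddCircle (1 : ℝ)) → ℂ)
      =ᵐ[volume] fun x => Set.indicator G (fun _ => (1 : ℂ)) x
          * (g : (Fin d → AddCircle (1 : ℝ)) → ℂ) x)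
    (hΓ : ∀ g, (Γop g : (Fin d → AddCircle (1 : ℝ)) → ℂ)
      =ᵐ[volume] fun x => Set.indicator G (fun y => (γ y : ℂ)) x
          * (g : (Fin d → AddCircle (1 : ℝ)) → ℂ) x)
    (hQQ : (ContinuousLinearMap.adjoint Q).comp Q = P)
    (hQQ' : Q.comp (ContinuousLinearMap.adjoint Q) = P)
    (hint : H.comp Q = Q.comp Γop)
    (C : ℝ) (hC : 0 < C)
    (hsub : ∀ (E s : ℝ), 0 < s →
      volume {x ∈ G | γ x ∈ Set.Icc (E - s) (E + s)} ≤ ENNReal.ofReal (C * s)) :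
    (∀ g, ∃ ν : Measure ℝ, IsFiniteMeasure ν ∧ ν ≪ (volume : Measure ℝ) ∧
      ∀ n : ℕ, ∫ t : ℝ, t ^ n ∂ν
        = ((inner ℂ (Q g) ((H ^ n) (Q g)) : ℂ)).re) ∧
    (∀ E : ℝ, (∀ s > (0 : ℝ),
        0 < volume {x ∈ G | γ x ∈ Set.Icc (E - s) (E + s)}) →
      (E : ℂ) ∈ spectrum ℂ H) := by
  constructor
  · -- Part 1: absolutely continuous spectral measures
    intro g
    -- basic facts
    have hx0 : Nonempty (Fin d → AddCircle (1:ℝ)) := inferInstance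
    obtain ⟨x0⟩ := hx0
    have hCγ0 : 0 ≤ Cγ := le_trans (abs_nonneg _) (hγbd x0)
    have hGfin : volume G ≠ ⊤ := by
      have hsubset : G ⊆ {x ∈ G | γ x ∈ Set.Icc (0 - (Cγ+1)) (0 + (Cγ+1))} := by
        intro x hx
        refine ⟨hx, ?_⟩
        have h := abs_le.1 (hγbd x)
        constructor <;> [linarith [h.1]; linarith [h.2]]
      exact (((measure_mono hsubset).trans (hsub 0 (Cγ+1) (by positivity))).trans_lt
        ENNReal.ofReal_lt_top).ne
    -- the pushforward of `volume.restrict G` under `γ`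
    set mG : Measure ℝ := Measure.map γ (volume.restrict G) with hmGdef
    have hmGuniv : mG Set.univ = volume G := by
      rw [hmGdef, Measure.map_apply hγmeas MeasurableSet.univ, Set.preimage_univ,
        Measure.restrict_apply_univ]
    haveI : IsFiniteMeasure mG := ⟨by rw [hmGuniv]; exact lt_of_le_of_ne le_top hGfin⟩
    have hmGIcc : ∀ a b : ℝ, a < b → mG (Set.Icc a b) ≤ ENNReal.ofReal (C * (b - a)) := by
      intro a b hab
      have h1 : mG (Set.Icc a b) = volume (γ ⁻¹' Set.Icc a b ∩ G) := by
        rw [hmGdef, Measure.map_apply hγmeas measurableSet_Icc,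
          Measure.restrict_apply (hγmeas measurableSet_Icc)]
      have h2 : γ ⁻¹' Set.Icc a b ∩ G
          = {x ∈ G | γ x ∈ Set.Icc ((a+b)/2 - (b-a)/2) ((a+b)/2 + (b-a)/2)} := by
        ext x
        constructor
        · rintro ⟨hx1, hx2⟩
          exact ⟨hx2, by constructor <;> [linarith [hx1.1]; linarith [hx1.2]]⟩
        · rintro ⟨hx1, hx2⟩
          exact ⟨⟨by linarith [hx2.1], by linarith [hx2.2]⟩, hx1⟩
      rw [h1, h2]
      refine (hsub ((a+b)/2) ((b-a)/2) (by linarith)).trans ?_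
      exact ENNReal.ofReal_le_ofReal (by nlinarith)
    have hmGle : mG ≤ (ENNReal.ofReal C) • (volume : Measure ℝ) := by
      refine aux_ac mG C hC.le (fun a b hab => ?_)
      rcases eq_or_lt_of_le hab with h | h
      · subst h; simp
      · exact (measure_mono Set.Ioc_subset_Icc_self).trans (hmGIcc a b h)
    have hmG0 : ∀ A : Set ℝ, MeasurableSet A → volume A = 0 → volume (γ ⁻¹' A ∩ G) = 0 := by
      intro A hAm hA0
      have h1 : mG A = volume (γ ⁻¹' A ∩ G) := by
        rw [hmGdef, Measure.map_apply hγmeas hAm, Measure.restrict_apply (hγmeas hAm)]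
      have h2 := hmGle A
      rw [Measure.smul_apply, hA0, smul_eq_mul, mul_zero] at h2
      rw [← h1]
      exact le_antisymm h2 zero_le
    -- the vector-weighted measure
    set wN : (Fin d → AddCircle (1:ℝ)) → ℝ≥0 :=
      fun x => ‖(g : (Fin d → AddCircle (1:ℝ)) → ℂ) x‖₊ ^ 2 with hwN
    have hwNmeas : AEMeasurable wN (volume.restrict G) := by
      have h1 : AEMeasurable (fun x => ‖(g : (Fin d → AddCircle (1:ℝ)) → ℂ) x‖₊) volume :=
        (Lp.aestronglyMeasurable g).nnnorm.aemeasurable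
      exact (h1.pow_const 2).restrict
    set μG : Measure (Fin d → AddCircle (1:ℝ)) :=
      (volume.restrict G).withDensity (fun x => (wN x : ENNReal)) with hμGdef
    set ν : Measure ℝ := Measure.map γ μG with hνdef
    have hg2 : ∫⁻ x, ((wN x : ENNReal)) ∂(volume : Measure (Fin d → AddCircle (1:ℝ))) < ⊤ := by
      have h1 := lintegral_rpow_enorm_lt_top_of_eLpNorm_lt_top (f := ((g : Lp ℂ 2 _) :
        (Fin d → AddCircle (1:ℝ)) → ℂ)) (p := 2) two_ne_zero ENNReal.ofNat_ne_top
        (Lp.eLpNorm_lt_top g)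
      refine lt_of_eq_of_lt ?_ h1
      congr 1
      ext x
      rw [hwN]
      push_cast
      rw [ENNReal.toReal_ofNat, ← ENNReal.rpow_natCast]
      norm_num
      rfl
    haveI : IsFiniteMeasure ν := by
      constructor
      rw [hνdef, Measure.map_apply hγmeas MeasurableSet.univ, Set.preimage_univ, hμGdef,
        withDensity_apply _ MeasurableSet.univ, Measure.restrict_restrict MeasurableSet.univ,
        Set.univ_inter]
      calc ∫⁻ x in G, (wN x : ENNReal) ∂volume ≤ ∫⁻ x, (wN x : ENNReal) ∂volume :=
            setLIntegral_le_lintegral _ _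
        _ < ⊤ := hg2
    refine ⟨ν, inferInstance, ?_, ?_⟩
    · -- absolute continuity
      refine Measure.AbsolutelyContinuous.mk (fun A hAm hA0 => ?_)
      rw [hνdef, Measure.map_apply hγmeas hAm, hμGdef, withDensity_apply _ (hγmeas hAm),
        Measure.restrict_restrict (hγmeas hAm), Measure.restrict_eq_zero.2 (hmG0 A hAm hA0)]
      simp
    · -- the moments
      intro n
      -- operator intertwining for powers
      have hint' : H * Q = Q * Γop := by
        ext x
        rw [ContinuousLinearMap.mul_apply, ContinuousLinearMap.mul_apply,
          ← ContinuousLinearMap.comp_apply, ← ContinuousLinearMap.comp_apply, hint]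
      have key : ∀ m : ℕ, H ^ m * Q = Q * Γop ^ m := by
        intro m
        induction m with
        | zero => simp
        | succ m ih =>
          rw [pow_succ', mul_assoc, ih, ← mul_assoc, hint', mul_assoc, ← pow_succ']
      have hHn : (H ^ n) (Q g) = Q ((Γop ^ n) g) := by
        rw [← ContinuousLinearMap.comp_apply, ← ContinuousLinearMap.mul_def, key n,
          ContinuousLinearMap.mul_def, ContinuousLinearMap.comp_apply]
      -- a.e. description of powers of Γop
      have Γpow : ∀ m : ℕ, ((Γop ^ m) g : (Fin d → AddCircle (1:ℝ)) → ℂ)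
          =ᵐ[volume] fun x => (Set.indicator G (fun y => (γ y : ℂ)) x) ^ m
            * (g : (Fin d → AddCircle (1:ℝ)) → ℂ) x := by
        intro m
        induction m with
        | zero => simp
        | succ m ih =>
          have h1 : (Γop ^ (m+1)) g = Γop ((Γop ^ m) g) := by
            rw [pow_succ', ContinuousLinearMap.mul_apply]
          rw [h1]
          filter_upwards [hΓ ((Γop ^ m) g), ih] with x h2 h3
          rw [h2, h3]
          ring
      -- inner product identity
      have hinner : (inner ℂ (Q g) ((H ^ n) (Q g)) : ℂ) = inner ℂ (P g) ((Γop ^ n) g) := by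
        rw [hHn, ← ContinuousLinearMap.adjoint_inner_left Q ((Γop ^ n) g) (Q g)]
        congr 1
        rw [← ContinuousLinearMap.comp_apply, hQQ]
      -- compute both sides as integrals over G
      have hstep1 : ∫ t : ℝ, t ^ n ∂ν
          = ∫ x in G, ‖(g : (Fin d → AddCircle (1:ℝ)) → ℂ) x‖ ^ 2 * γ x ^ n ∂volume := by
        rw [hνdef, integral_map hγmeas.aemeasurable
          ((continuous_pow n).aestronglyMeasurable), hμGdef,
          integral_withDensity_eq_integral_smul₀ hwNmeas _]
        refine integral_congr_ae (Filter.Eventually.of_forall (fun x => ?_))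
        show wN x • (γ x ^ n) = _
        rw [hwN, NNReal.smul_def]
        push_cast
        rw [smul_eq_mul]
      have hintg : Integrable (fun x => (inner ℂ ((P g : Lp ℂ 2 _) x) (((Γop ^ n) g : Lp ℂ 2 _) x) : ℂ))
          volume := L2.integrable_inner _ _
      have hstep2 : ((inner ℂ (Q g) ((H ^ n) (Q g)) : ℂ)).re
          = ∫ x in G, γ x ^ n * ‖(g : (Fin d → AddCircle (1:ℝ)) → ℂ) x‖ ^ 2 ∂volume := by
        rw [hinner, L2.inner_def, ← RCLike.re_to_complex, ← integral_re hintg]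
        have hcongr : (fun x => RCLike.re (inner ℂ ((P g : Lp ℂ 2 _) x)
              (((Γop ^ n) g : Lp ℂ 2 _) x) : ℂ))
            =ᵐ[volume] Set.indicator G
              (fun x => γ x ^ n * ‖(g : (Fin d → AddCircle (1:ℝ)) → ℂ) x‖ ^ 2) := by
          filter_upwards [hP g, Γpow n] with x h1 h2
          rw [RCLike.inner_apply, h1, h2]
          by_cases hx : x ∈ G
          · rw [Set.indicator_of_mem hx, Set.indicator_of_mem hx, Set.indicator_of_mem hx,
              one_mul, mul_comm _ ((starRingEnd ℂ) _)]
            have hconj : (starRingEnd ℂ) ((g : (Fin d → AddCircle (1:ℝ)) → ℂ) x)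
                * ((g : (Fin d → AddCircle (1:ℝ)) → ℂ) x)
                = ((‖(g : (Fin d → AddCircle (1:ℝ)) → ℂ) x‖ ^ 2 : ℝ) : ℂ) := by
              rw [mul_comm, Complex.mul_conj']
              norm_cast
            calc RCLike.re ((starRingEnd ℂ) ((g : (Fin d → AddCircle (1:ℝ)) → ℂ) x)
                  * (((γ x : ℂ)) ^ n * (g : (Fin d → AddCircle (1:ℝ)) → ℂ) x))
                = RCLike.re (((γ x : ℂ)) ^ n
                  * ((starRingEnd ℂ) ((g : (Fin d → AddCircle (1:ℝ)) → ℂ) x)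
                    * (g : (Fin d → AddCircle (1:ℝ)) → ℂ) x)) := by ring_nf
              _ = γ x ^ n * ‖(g : (Fin d → AddCircle (1:ℝ)) → ℂ) x‖ ^ 2 := by
                  rw [hconj]
                  norm_cast
          · rw [Set.indicator_of_notMem hx, Set.indicator_of_notMem hx,
              Set.indicator_of_notMem hx, zero_mul, map_zero, mul_zero]
            simp
        rw [integral_congr_ae hcongr, integral_indicator hGmeas]
      rw [hstep1, hstep2]
      refine integral_congr_ae (Filter.Eventually.of_forall (fun x => ?_))
      ring
  · -- Part 2: Weyl sequence argument
    intro E hE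
    by_contra hspec
    rw [spectrum.notMem_iff] at hspec
    obtain ⟨u, hu⟩ := hspec
    set R := (u⁻¹ : _ˣ).1 with hR
    set K : ℝ := ‖R‖ * ‖Q‖ with hK
    have hK0 : 0 ≤ K := mul_nonneg (norm_nonneg _) (norm_nonneg _)
    set s : ℝ := 1 / (K + 1) with hs
    have hs0 : 0 < s := by positivity
    set A : Set (Fin d → AddCircle (1 : ℝ)) := {x ∈ G | γ x ∈ Set.Icc (E - s) (E + s)} with hA
    have hAmeas : MeasurableSet A := hGmeas.inter (hγmeas measurableSet_Icc)
    have hAfin : volume A ≠ ⊤ :=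
      ((hsub E s hs0).trans_lt ENNReal.ofReal_lt_top).ne
    have hApos : 0 < volume A := hE s hs0
    set f := indicatorConstLp 2 hAmeas hAfin (1 : ℂ) with hf
    have hfμ : ⇑f =ᵐ[volume] A.indicator fun _ => (1:ℂ) := indicatorConstLp_coeFn
    have hfpos : 0 < ‖f‖ := by
      rw [hf, norm_indicatorConstLp two_ne_zero ENNReal.ofNat_ne_top]
      have h1 : 0 < (volume A).toReal := ENNReal.toReal_pos hApos.ne' hAfin
      have h2 := Real.rpow_pos_of_pos h1 (1 / ENNReal.toReal 2)
      simpa [Measure.real] using h2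
    -- ‖Γop f - E • f‖ ≤ s * ‖f‖
    have hbound : ‖(E : ℂ) • f - Γop f‖ ≤ s * ‖f‖ := by
      have hcoe : ⇑((E : ℂ) • f - Γop f) =ᵐ[volume]
          fun x => (E : ℂ) * f x - Set.indicator G (fun y => (γ y : ℂ)) x * f x := by
        filter_upwards [Lp.coeFn_sub ((E : ℂ) • f) (Γop f), Lp.coeFn_smul (E : ℂ) f, hΓ f]
          with x h1 h2 h3
        rw [h1, Pi.sub_apply, h2, Pi.smul_apply, h3, smul_eq_mul]
      have hptwise : ∀ᵐ x ∂(volume : Measure (Fin d → AddCircle (1 : ℝ))),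
          ‖((E : ℂ) • f - Γop f) x‖ ≤ ‖((s:ℂ) • f) x‖ := by
        filter_upwards [hcoe, hfμ, Lp.coeFn_smul (s : ℂ) f] with x h1 h2 h3
        rw [h1, h3, Pi.smul_apply, h2]
        by_cases hx : x ∈ A
        · have hγx : γ x ∈ Set.Icc (E - s) (E + s) := hx.2
          rw [Set.indicator_of_mem hx, Set.indicator_of_mem hx.1, mul_one, mul_one,
            smul_eq_mul, mul_one]
          rw [show (E:ℂ) - (γ x : ℂ) = ((E - γ x : ℝ) : ℂ) by push_cast; ring]
          rw [Complex.norm_real, Complex.norm_real]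
          rw [Real.norm_eq_abs, Real.norm_eq_abs, abs_of_pos hs0]
          rw [abs_le]
          exact ⟨by linarith [hγx.2], by linarith [hγx.1]⟩
        · rw [Set.indicator_of_notMem hx]
          simp
      calc ‖(E : ℂ) • f - Γop f‖ ≤ ‖(s:ℂ) • f‖ := by
            rw [Lp.norm_def, Lp.norm_def]
            exact ENNReal.toReal_mono (Lp.eLpNorm_ne_top _) (eLpNorm_mono_ae hptwise)
        _ = s * ‖f‖ := by
            rw [norm_smul, Complex.norm_real, Real.norm_eq_abs, abs_of_pos hs0]
    -- ‖Q f‖ = ‖f‖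
    have hPf : P f = f := by
      ext1
      filter_upwards [hP f, hfμ] with x h1 h2
      rw [h1, h2]
      by_cases hx : x ∈ A
      · rw [Set.indicator_of_mem hx, Set.indicator_of_mem hx.1, one_mul]
      · rw [Set.indicator_of_notMem hx, mul_zero]
    have hQf : ‖Q f‖ = ‖f‖ := by
      have h1 : (inner ℂ (Q f) (Q f) : ℂ) = inner ℂ f f := by
        rw [← ContinuousLinearMap.adjoint_inner_left]
        have : (ContinuousLinearMap.adjoint Q) (Q f) = P f := by
          rw [← ContinuousLinearMap.comp_apply, hQQ]
        rw [this, hPf]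
      rw [norm_eq_sqrt_re_inner (𝕜 := ℂ) (Q f), norm_eq_sqrt_re_inner (𝕜 := ℂ) f, h1]
    -- intertwining
    have hHQf : u.val (Q f) = Q ((E : ℂ) • f - Γop f) := by
      rw [hu]
      have h1 : H (Q f) = Q (Γop f) := by
        rw [← ContinuousLinearMap.comp_apply, hint, ContinuousLinearMap.comp_apply]
      rw [ContinuousLinearMap.sub_apply, map_sub Q, h1]
      congr 1
      simp [Algebra.algebraMap_eq_smul_one]
      rfl
    -- contradiction
    have hinv : ∀ y, R (u.val y) = y := by
      intro y
      rw [hR, ← ContinuousLinearMap.mul_apply, u.inv_mul, ContinuousLinearMap.one_apply]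
    have hchain : ‖f‖ ≤ K * s * ‖f‖ := by
      calc ‖f‖ = ‖Q f‖ := hQf.symm
        _ = ‖R (u.val (Q f))‖ := by rw [hinv]
        _ ≤ ‖R‖ * ‖u.val (Q f)‖ := R.le_opNorm _
        _ = ‖R‖ * ‖Q ((E : ℂ) • f - Γop f)‖ := by rw [hHQf]
        _ ≤ ‖R‖ * (‖Q‖ * ‖(E : ℂ) • f - Γop f‖) :=
            mul_le_mul_of_nonneg_left (Q.le_opNorm _) (norm_nonneg _)
        _ ≤ ‖R‖ * (‖Q‖ * (s * ‖f‖)) := by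
            have h2 := mul_le_mul_of_nonneg_left hbound (norm_nonneg Q)
            exact mul_le_mul_of_nonneg_left h2 (norm_nonneg R)
        _ = K * s * ‖f‖ := by ring
    have : K * s < 1 := by
      rw [hs]
      rw [mul_one_div]
      rw [div_lt_one (by linarith)]
      linarith
    nlinarith
end
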